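/- Let Z be a countable set and for each e ∈ Z let ε_e ∈ (0,1]. Identify subsets of Z with elements of {0,1}^Z, equipped with the product σ-algebra and the pointwise (coordinatewise) partial order. Let ν be the product Bernoulli measure on {0,1}^Z under which the coordinates are independent and coordinate e equals 1 with probability ε_e. Let μ be a probability measure on {0,1}^Z such that for every e ∈ Z the conditional probability under μ of the event {A : A(e) = 1}, given the σ-algebra generated by the coordinates (A(e'))_{e' ≠ e}, is μ-almost surely at most ε_e. Then μ is stochastically dominated by ν, i.e. for every bounded measurable function f : {0,1}^Z → ℝ that is monotone with respect to the pointwise order, ∫ f dμ ≤ ∫ f dν. -/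

import Mathlib

open MeasureTheory

/-- The sub-σ-algebra of the product σ-algebra on `{0,1}^Z` generated by the
coordinates `(A(e'))_{e' ≠ e}`. -/
def coordsExcept (Z : Type*) (e : Z) : MeasurableSpace (Z → Bool) :=
  MeasurableSpace.comap (fun (A : Z → Bool) (e' : {e' : Z // e' ≠ e}) => A (e' : Z))
    MeasurableSpace.pi

namespace HolleyAux
open Function Set ProbabilityTheory

lemma integrable_of_abs_le {α : Type*} [MeasurableSpace α] (μ : Measure α)
    [IsFiniteMeasure μ] {f : α → ℝ} (hm : Measurable f) {C : ℝ} (hb : ∀ A, |f A| ≤ C) :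
    Integrable f μ :=
  Integrable.mono' (integrable_const C) hm.aestronglyMeasurable
    (Filter.Eventually.of_forall fun A => by simpa [Real.norm_eq_abs] using hb A)

variable {Z : Type*}

lemma coordsExcept_le (e : Z) : coordsExcept Z e ≤ (MeasurableSpace.pi :
    MeasurableSpace (Z → Bool)) := by
  rw [coordsExcept]
  exact Measurable.comap_le
    (measurable_pi_lambda (fun (A : Z → Bool) (e' : {e' : Z // e' ≠ e}) => A (e' : Z))
      fun i => measurable_pi_apply (i : Z))

lemma measurable_restrict_coordsExcept (e : Z) :
    @Measurable _ _ (coordsExcept Z e) MeasurableSpace.pi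
      (fun (A : Z → Bool) (x : {e' : Z // e' ≠ e}) => A (x : Z)) := by
  rw [coordsExcept]
  exact Measurable.of_comap_le le_rfl

lemma measurable_eval_ne {e e' : Z} (h : e' ≠ e) :
    Measurable[coordsExcept Z e] (fun A : Z → Bool => A e') :=
  (measurable_pi_apply (⟨e', h⟩ : {x : Z // x ≠ e})).comp
    (measurable_restrict_coordsExcept e)

lemma measurable_update_coordsExcept [DecidableEq Z] (e : Z) (b : Bool) :
    @Measurable _ _ (coordsExcept Z e) MeasurableSpace.pi
      (fun A : Z → Bool => Function.update A e b) := by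
  refine @measurable_pi_lambda _ _ _ (coordsExcept Z e) _ _ fun e' => ?_
  by_cases h : e' = e
  · subst h
    have : (fun A : Z → Bool => Function.update A e' b e') = fun _ => b := by
      funext A; simp
    rw [this]; exact measurable_const
  · have : (fun A : Z → Bool => Function.update A e b e') = fun A : Z → Bool => A e' := by
      funext A; simp [Function.update_apply, h]
    rw [this]
    exact measurable_eval_ne h

lemma measurableSet_eval (e : Z) : MeasurableSet {B : Z → Bool | B e = true} := by
  have : {B : Z → Bool | B e = true} = (fun B : Z → Bool => B e) ⁻¹' {true} := rfl
  rw [this]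
  exact (measurable_pi_apply e) (measurableSet_singleton true)

lemma update_le_update [DecidableEq Z] (A : Z → Bool) (e : Z) :
    Function.update A e false ≤ Function.update A e true := by
  intro e'
  by_cases h : e' = e
  · subst h; simp
  · simp [Function.update_apply, h]

section Master

variable [DecidableEq Z] (e : Z) (μ : Measure (Z → Bool)) [IsProbabilityMeasure μ]
  (f : (Z → Bool) → ℝ)

lemma master (hm : Measurable f) (C : ℝ) (hb : ∀ A, |f A| ≤ C) :
    ∫ A, f A ∂μ = (∫ A, f (Function.update A e false) ∂μ)
      + ∫ A, (f (Function.update A e true) - f (Function.update A e false))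
          * (μ[Set.indicator {B : Z → Bool | B e = true} (fun _ => (1:ℝ)) |
              coordsExcept Z e]) A ∂μ := by
  have hC : 0 ≤ C := le_trans (abs_nonneg _) (hb (fun _ => false))
  set i : (Z → Bool) → ℝ :=
    Set.indicator {B : Z → Bool | B e = true} (fun _ => (1:ℝ)) with hi_def
  set d : (Z → Bool) → ℝ :=
    fun A => f (Function.update A e true) - f (Function.update A e false) with hd_def
  have hd_meas : Measurable d :=
    (hm.comp measurable_update_left).sub (hm.comp measurable_update_left)
  have hd_sm : StronglyMeasurable[coordsExcept Z e] d :=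
    (((hm.comp (measurable_update_coordsExcept e true)).sub
      (hm.comp (measurable_update_coordsExcept e false)))).stronglyMeasurable
  have hd_b : ∀ A, |d A| ≤ C + C := fun A =>
    (abs_sub _ _).trans (add_le_add (hb _) (hb _))
  have hi_meas : Measurable i := measurable_const.indicator (measurableSet_eval e)
  have hi_b : ∀ A, |i A| ≤ 1 := by
    intro A
    by_cases h : A ∈ {B : Z → Bool | B e = true}
    · simp [hi_def, Set.indicator_of_mem h]
    · simp [hi_def, Set.indicator_of_notMem h]
  have hpt : ∀ A, f A = f (Function.update A e false) + d A * i A := by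
    intro A
    by_cases h : A e = true
    · have h1 : Function.update A e true = A := by
        conv_lhs => rw [← h]
        exact Function.update_eq_self e A
      have h2 : i A = 1 :=
        Set.indicator_of_mem (show A ∈ {B : Z → Bool | B e = true} from h) _
      simp only [hd_def, hi_def] at *
      rw [h1, h2]; ring
    · have h' : A e = false := by simpa using h
      have h1 : Function.update A e false = A := by
        conv_lhs => rw [← h']
        exact Function.update_eq_self e A
      have h2 : i A = 0 :=
        Set.indicator_of_notMem (show A ∉ {B : Z → Bool | B e = true} from h) _
      simp only [hd_def, hi_def] at *
      rw [h1, h2]; ring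
  have intg : Integrable (fun A => f (Function.update A e false)) μ :=
    integrable_of_abs_le μ (hm.comp measurable_update_left) (fun A => hb _)
  have intdi : Integrable (fun A => d A * i A) μ := by
    refine integrable_of_abs_le μ (hd_meas.mul hi_meas) (C := (C + C) * 1) fun A => ?_
    rw [abs_mul]
    exact mul_le_mul (hd_b A) (hi_b A) (abs_nonneg _) (by linarith)
  have step1 : ∫ A, f A ∂μ
      = ∫ A, (f (Function.update A e false) + d A * i A) ∂μ :=
    integral_congr_ae (Filter.Eventually.of_forall hpt)
  rw [step1, integral_add intg intdi]
  congr 1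
  have hle := coordsExcept_le e
  have inti : Integrable i μ := integrable_of_abs_le μ hi_meas hi_b
  calc ∫ A, d A * i A ∂μ
      = ∫ A, (μ[fun A => d A * i A | coordsExcept Z e]) A ∂μ :=
        (integral_condExp hle).symm
    _ = ∫ A, d A * (μ[i | coordsExcept Z e]) A ∂μ := by
        refine integral_congr_ae ?_
        have h := condExp_mul_of_stronglyMeasurable_left (μ := μ) (m := coordsExcept Z e)
          hd_sm (by exact intdi) inti
        filter_upwards [h] with A hA
        exact hA

end Master

lemma coordsExcept_eq (e : Z) :
    coordsExcept Z e = ⨆ e' ∈ ({e}ᶜ : Set Z),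
      MeasurableSpace.comap (fun A : Z → Bool => A e') inferInstance := by
  apply le_antisymm
  · rw [coordsExcept, show (MeasurableSpace.pi :
      MeasurableSpace ({e' : Z // e' ≠ e} → Bool)) = ⨆ a, MeasurableSpace.comap
        (fun b => b a) inferInstance from rfl, MeasurableSpace.comap_iSup]
    refine iSup_le fun x => ?_
    rw [MeasurableSpace.comap_comp]
    exact le_iSup₂ (f := fun (e' : Z) (_ : e' ∈ ({e}ᶜ : Set Z)) =>
      MeasurableSpace.comap (fun A : Z → Bool => A e') inferInstance) x.1 x.2
  · refine iSup₂_le fun e' he' => ?_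
    have : (fun A : Z → Bool => A e')
        = (fun g : {x : Z // x ≠ e} → Bool => g ⟨e', he'⟩)
          ∘ (fun (A : Z → Bool) (x : {x : Z // x ≠ e}) => A (x : Z)) := rfl
    rw [coordsExcept, this, ← MeasurableSpace.comap_comp]
    exact MeasurableSpace.comap_mono (measurable_pi_apply _).comap_le




variable {Z : Type*} [DecidableEq Z]

/-- One-coordinate replacement, inequality version. -/
lemma stepA (e : Z) (ε : ℝ) (hε0 : 0 ≤ ε) (μ : Measure (Z → Bool))
    [IsProbabilityMeasure μ]
    (hc : ∀ᵐ A ∂μ,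
      (μ[Set.indicator {B : Z → Bool | B e = true} (fun _ => (1:ℝ)) |
          coordsExcept Z e]) A ≤ ε)
    (f : (Z → Bool) → ℝ) (hm : Measurable f) (C : ℝ) (hb : ∀ A, |f A| ≤ C)
    (hmono : Monotone f) :
    ∫ A, f A ∂μ ≤ ∫ A, (f (Function.update A e false)
      + ε * (f (Function.update A e true) - f (Function.update A e false))) ∂μ := by
  set d : (Z → Bool) → ℝ :=
    fun A => f (Function.update A e true) - f (Function.update A e false) with hd_def
  have hd_meas : Measurable d :=
    (hm.comp measurable_update_left).sub (hm.comp measurable_update_left)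
  have hd_b : ∀ A, |d A| ≤ C + C := fun A =>
    (abs_sub _ _).trans (add_le_add (hb _) (hb _))
  have hd_nonneg : ∀ A, 0 ≤ d A := fun A =>
    sub_nonneg.mpr (hmono (update_le_update A e))
  have intg : Integrable (fun A => f (Function.update A e false)) μ :=
    integrable_of_abs_le μ (hm.comp measurable_update_left) (fun A => hb _)
  have intd : Integrable d μ := integrable_of_abs_le μ hd_meas hd_b
  have intdp : Integrable (fun A => d A *
      (μ[Set.indicator {B : Z → Bool | B e = true} (fun _ => (1:ℝ)) |
        coordsExcept Z e]) A) μ :=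
    Integrable.bdd_mul (c := C + C) integrable_condExp hd_meas.aestronglyMeasurable
      (Filter.Eventually.of_forall fun A => by simpa [Real.norm_eq_abs] using hd_b A)
  have inted : Integrable (fun A => ε * d A) μ := intd.const_mul ε
  rw [master e μ f hm C hb, integral_add intg inted]
  refine add_le_add_right ?_ _
  refine integral_mono_ae intdp inted ?_
  filter_upwards [hc] with A hA
  calc d A * _ ≤ d A * ε := mul_le_mul_of_nonneg_left hA (hd_nonneg A)
    _ = ε * d A := mul_comm _ _

/-- One-coordinate replacement, equality version (for the product measure). -/
lemma stepA' (e : Z) (ε : ℝ) (ν : Measure (Z → Bool)) [IsProbabilityMeasure ν]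
    (hc : (ν[Set.indicator {B : Z → Bool | B e = true} (fun _ => (1:ℝ)) |
          coordsExcept Z e]) =ᵐ[ν] fun _ => ε)
    (f : (Z → Bool) → ℝ) (hm : Measurable f) (C : ℝ) (hb : ∀ A, |f A| ≤ C) :
    ∫ A, f A ∂ν = ∫ A, (f (Function.update A e false)
      + ε * (f (Function.update A e true) - f (Function.update A e false))) ∂ν := by
  set d : (Z → Bool) → ℝ :=
    fun A => f (Function.update A e true) - f (Function.update A e false) with hd_def
  have hd_meas : Measurable d :=
    (hm.comp measurable_update_left).sub (hm.comp measurable_update_left)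
  have hd_b : ∀ A, |d A| ≤ C + C := fun A =>
    (abs_sub _ _).trans (add_le_add (hb _) (hb _))
  have intg : Integrable (fun A => f (Function.update A e false)) ν :=
    integrable_of_abs_le ν (hm.comp measurable_update_left) (fun A => hb _)
  have intd : Integrable d ν := integrable_of_abs_le ν hd_meas hd_b
  have inted : Integrable (fun A => ε * d A) ν := intd.const_mul ε
  rw [master e ν f hm C hb, integral_add intg inted]
  congr 1
  refine integral_congr_ae ?_
  filter_upwards [hc] with A hA
  rw [hA, mul_comm]




variable {Z : Type*}

lemma cond_nu [Countable Z] (ν : Measure (Z → Bool)) [IsProbabilityMeasure ν]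
    (hν_indep : ProbabilityTheory.iIndepFun
      (fun (e : Z) (A : Z → Bool) => A e) ν)
    (e : Z) {εe : ℝ} (hεe : 0 ≤ εe) (hν_marginal : ν {A | A e = true} = ENNReal.ofReal εe) :
    (ν[Set.indicator {B : Z → Bool | B e = true} (fun _ => (1:ℝ)) |
        coordsExcept Z e]) =ᵐ[ν] fun _ => εe := by
  have hle₁ : MeasurableSpace.comap (fun A : Z → Bool => A e)
      inferInstance ≤ MeasurableSpace.pi := (measurable_pi_apply e).comap_le
  have hle₂ := coordsExcept_le e
  have hs₁ : MeasurableSet[MeasurableSpace.comap (fun A : Z → Bool => A e)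
      inferInstance] {B : Z → Bool | B e = true} :=
    ⟨{true}, trivial, rfl⟩
  have hsm : StronglyMeasurable[MeasurableSpace.comap (fun A : Z → Bool => A e)
      inferInstance] (Set.indicator {B : Z → Bool | B e = true} (fun _ => (1:ℝ))) :=
    stronglyMeasurable_const.indicator hs₁
  have hindep : Indep (MeasurableSpace.comap (fun A : Z → Bool => A e) inferInstance)
      (coordsExcept Z e) ν := by
    have h := ProbabilityTheory.indep_biSup_compl
      (fun i => (measurable_pi_apply (X := fun _ : Z => Bool) i).comap_le)
      hν_indep.iIndep ({e}ᶜ : Set Z)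
    rw [compl_compl] at h
    rw [coordsExcept_eq e]
    have he : (⨆ n ∈ ({e} : Set Z), MeasurableSpace.comap
        (fun A : Z → Bool => A n) inferInstance) = MeasurableSpace.comap
        (fun A : Z → Bool => A e) inferInstance := by
      simp
    rw [he] at h
    exact h.symm
  have key := condExp_indep_eq hle₁ hle₂ hsm hindep
  have hint : ∫ A, Set.indicator {B : Z → Bool | B e = true} (fun _ => (1:ℝ)) A ∂ν
      = εe := by
    rw [integral_indicator_const (1 : ℝ) (measurableSet_eval e), measureReal_def, hν_marginal,
      smul_eq_mul, mul_one, ENNReal.toReal_ofReal hεe]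
  filter_upwards [key] with A hA
  rw [hA, hint]




variable {Z : Type*}

lemma update_mono [DecidableEq Z] {A B : Z → Bool} (h : A ≤ B) (e : Z) (b : Bool) :
    Function.update A e b ≤ Function.update B e b := by
  intro e'
  by_cases he : e' = e
  · subst he; simp
  · simpa [Function.update_apply, he] using h e'

lemma finite_dim [Countable Z] (ε : Z → ℝ) (hε : ∀ e, 0 < ε e ∧ ε e ≤ 1)
    (μ ν : Measure (Z → Bool)) [IsProbabilityMeasure μ] [IsProbabilityMeasure ν]
    (hν_indep : ProbabilityTheory.iIndepFun
      (fun (e : Z) (A : Z → Bool) => A e) ν)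
    (hν_marginal : ∀ e : Z, ν {A | A e = true} = ENNReal.ofReal (ε e))
    (hcond : ∀ e : Z, ∀ᵐ A ∂μ,
      (μ[Set.indicator {A : Z → Bool | A e = true} (fun _ => (1 : ℝ)) |
        coordsExcept Z e]) A ≤ ε e)
    (S : Finset Z) :
    ∀ (f : (Z → Bool) → ℝ) (C : ℝ), Measurable f → (∀ A, |f A| ≤ C) → Monotone f →
      (∀ A B : Z → Bool, (∀ e ∈ S, A e = B e) → f A = f B) →
      ∫ A, f A ∂μ ≤ ∫ A, f A ∂ν := by
  classical
  induction S using Finset.induction_on with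
  | empty =>
    intro f C hm hb hmono hdep
    have hf : f = fun _ => f (fun _ => false) := funext fun A => hdep A _ (by simp)
    rw [hf]
    simp
  | insert e S hnot ih =>
    intro f C hm hb hmono hdep
    have hε0 : 0 < ε e := (hε e).1
    have hε1 : ε e ≤ 1 := (hε e).2
    set g : (Z → Bool) → ℝ := fun A => f (Function.update A e false)
      + ε e * (f (Function.update A e true) - f (Function.update A e false)) with hg
    have hgalt : ∀ A, g A = (1 - ε e) * f (Function.update A e false)
        + ε e * f (Function.update A e true) := fun A => by rw [hg]; ring
    have hgm : Measurable g :=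
      ((hm.comp measurable_update_left).add
        (((hm.comp measurable_update_left).sub
          (hm.comp measurable_update_left)).const_mul (ε e)))
    have hgb : ∀ A, |g A| ≤ C := by
      intro A
      have h0 := abs_le.mp (hb (Function.update A e false))
      have h1 := abs_le.mp (hb (Function.update A e true))
      rw [abs_le, hgalt A]
      constructor <;> nlinarith [h0.1, h0.2, h1.1, h1.2]
    have hgmono : Monotone g := by
      intro A B hAB
      have h0 := hmono (update_mono hAB e false)
      have h1 := hmono (update_mono hAB e true)
      rw [hgalt A, hgalt B]
      nlinarith
    have hgdep : ∀ A B : Z → Bool, (∀ e' ∈ S, A e' = B e') → g A = g B := by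
      intro A B h
      have key : ∀ b : Bool, f (Function.update A e b) = f (Function.update B e b) := by
        intro b
        refine hdep _ _ fun e' he' => ?_
        by_cases hee : e' = e
        · subst hee; simp
        · rcases Finset.mem_insert.mp he' with rfl | h'
          · simp
          · simp [Function.update_apply, hee, h _ h']
      rw [hg]
      simp only [key]
    calc ∫ A, f A ∂μ ≤ ∫ A, g A ∂μ :=
          stepA e (ε e) hε0.le μ (hcond e) f hm C hb hmono
      _ ≤ ∫ A, g A ∂ν := ih g C hgm hgb hgmono hgdep
      _ = ∫ A, f A ∂ν :=
          (stepA' e (ε e) ν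
            (cond_nu ν hν_indep e hε0.le (hν_marginal e)) f hm C hb).symm




variable {Z : Type*}

lemma stepClosed [Countable Z] (ε : Z → ℝ) (hε : ∀ e, 0 < ε e ∧ ε e ≤ 1)
    (μ ν : Measure (Z → Bool)) [IsProbabilityMeasure μ] [IsProbabilityMeasure ν]
    (hν_indep : ProbabilityTheory.iIndepFun
      (fun (e : Z) (A : Z → Bool) => A e) ν)
    (hν_marginal : ∀ e : Z, ν {A | A e = true} = ENNReal.ofReal (ε e))
    (hcond : ∀ e : Z, ∀ᵐ A ∂μ,
      (μ[Set.indicator {A : Z → Bool | A e = true} (fun _ => (1 : ℝ)) |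
        coordsExcept Z e]) A ≤ ε e)
    {K : Set (Z → Bool)} (hKc : IsClosed K)
    (hKi : ∀ ⦃A B : Z → Bool⦄, A ≤ B → A ∈ K → B ∈ K) :
    μ K ≤ ν K := by
  classical
  obtain ⟨inj, hinj⟩ := Countable.exists_injective_nat Z
  set Kk : ℕ → Set (Z → Bool) :=
    fun k => {A | ∃ B ∈ K, ∀ e, inj e < k → B e = A e} with hKk
  have hfin : ∀ k : ℕ, Set.Finite {e : Z | inj e < k} := fun k =>
    Set.Finite.preimage (Set.injOn_of_injective hinj) (Set.finite_Iio k)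
  have hmeas : ∀ k, MeasurableSet (Kk k) := by
    intro k
    have hrep : Kk k = (fun (A : Z → Bool) (x : {e : Z // inj e < k}) => A (x : Z)) ⁻¹'
        ((fun (A : Z → Bool) (x : {e : Z // inj e < k}) => A (x : Z)) '' K) := by
      ext A
      constructor
      · rintro ⟨B, hB, hBA⟩
        exact ⟨B, hB, funext fun x => hBA x x.2⟩
      · rintro ⟨B, hB, hBA⟩
        exact ⟨B, hB, fun e he => congrFun hBA ⟨e, he⟩⟩
    rw [hrep]
    haveI : Finite {e : Z // inj e < k} := (hfin k).to_subtype
    exact (measurable_pi_lambda _ fun x => measurable_pi_apply _)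
      ((Set.toFinite _).measurableSet)
  have hKkincr : ∀ k, ∀ ⦃A A' : Z → Bool⦄, A ≤ A' → A ∈ Kk k → A' ∈ Kk k := by
    intro k A A' hAA'
    rintro ⟨B, hB, hBA⟩
    refine ⟨fun e => if inj e < k then A' e else B e, ?_, fun e he => by simp [he]⟩
    refine hKi (fun e => ?_) hB
    by_cases he : inj e < k
    · simp only [he, if_true]
      exact (hBA e he).le.trans (hAA' e)
    · simp [he]
  have hanti : Antitone Kk := by
    intro k l hkl A
    rintro ⟨B, hB, hBA⟩
    exact ⟨B, hB, fun e he => hBA e (lt_of_lt_of_le he hkl)⟩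
  have hInt : ⋂ k, Kk k = K := by
    apply Set.Subset.antisymm
    · intro A hA
      have h' : ∀ k, ∃ B ∈ K, ∀ e, inj e < k → B e = A e :=
        fun k => Set.mem_iInter.mp hA k
      choose B hBK hBA using h'
      have htend : Filter.Tendsto B Filter.atTop (nhds A) := by
        refine tendsto_pi_nhds.mpr fun e => ?_
        refine tendsto_atTop_of_eventually_const (i₀ := inj e + 1) fun k hk => ?_
        exact hBA k e (lt_of_lt_of_le (Nat.lt_succ_self _) hk)
      exact hKc.mem_of_tendsto htend (Filter.Eventually.of_forall hBK)
    · intro A hA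
      exact Set.mem_iInter.mpr fun k => ⟨A, hA, fun _ _ => rfl⟩
  have hcomp : ∀ k, μ (Kk k) ≤ ν (Kk k) := by
    intro k
    set S : Finset Z := (hfin k).toFinset with hS
    have hmemS : ∀ e : Z, e ∈ S ↔ inj e < k := by
      intro e; rw [hS, Set.Finite.mem_toFinset]; rfl
    have key := finite_dim ε hε μ ν hν_indep hν_marginal hcond S
      ((Kk k).indicator fun _ => (1:ℝ)) 1
      (measurable_const.indicator (hmeas k))
      (by
        intro A
        by_cases h : A ∈ Kk k <;> simp [Set.indicator_apply, h])
      (by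
        intro A B hAB
        by_cases h : A ∈ Kk k
        · simp [Set.indicator_apply, h, hKkincr k hAB h]
        · by_cases h' : B ∈ Kk k <;> simp [Set.indicator_apply, h, h'])
      (by
        intro A B h
        have hiff : A ∈ Kk k ↔ B ∈ Kk k := by
          constructor
          · rintro ⟨B', h1, h2⟩
            exact ⟨B', h1, fun e he => (h2 e he).trans (h e ((hmemS e).mpr he))⟩
          · rintro ⟨B', h1, h2⟩
            exact ⟨B', h1, fun e he => (h2 e he).trans (h e ((hmemS e).mpr he)).symm⟩
        by_cases h' : A ∈ Kk k
        · simp [Set.indicator_apply, h', hiff.mp h']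
        · have h'' : B ∉ Kk k := fun hB => h' (hiff.mpr hB)
          simp [Set.indicator_apply, h', h''])
    rw [integral_indicator_const (1 : ℝ) (hmeas k),
      integral_indicator_const (1 : ℝ) (hmeas k), smul_eq_mul, smul_eq_mul,
      mul_one, mul_one] at key
    exact (ENNReal.toReal_le_toReal (measure_ne_top μ _) (measure_ne_top ν _)).mp key
  have hν_tendsto := tendsto_measure_iInter_atTop
    (μ := ν) (fun k => (hmeas k).nullMeasurableSet) hanti ⟨0, measure_ne_top ν _⟩
  rw [hInt] at hν_tendsto
  refine ge_of_tendsto hν_tendsto (Filter.Eventually.of_forall fun k => ?_)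
  refine le_trans (measure_mono ?_) (hcomp k)
  rw [← hInt]
  exact Set.iInter_subset _ k




variable {Z : Type*}

lemma stepBorel [Countable Z] (ε : Z → ℝ) (hε : ∀ e, 0 < ε e ∧ ε e ≤ 1)
    (μ ν : Measure (Z → Bool)) [IsProbabilityMeasure μ] [IsProbabilityMeasure ν]
    (hν_indep : ProbabilityTheory.iIndepFun
      (fun (e : Z) (A : Z → Bool) => A e) ν)
    (hν_marginal : ∀ e : Z, ν {A | A e = true} = ENNReal.ofReal (ε e))
    (hcond : ∀ e : Z, ∀ᵐ A ∂μ,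
      (μ[Set.indicator {A : Z → Bool | A e = true} (fun _ => (1 : ℝ)) |
        coordsExcept Z e]) A ≤ ε e)
    {U : Set (Z → Bool)} (hU : MeasurableSet U)
    (hUi : ∀ ⦃A B : Z → Bool⦄, A ≤ B → A ∈ U → B ∈ U) :
    μ U ≤ ν U := by
  refine ENNReal.le_of_forall_pos_le_add fun δ hδ _ => ?_
  obtain ⟨F, hFU, hFc, hF⟩ := hU.exists_isClosed_lt_add (measure_ne_top μ U)
    (ε := (δ : ENNReal)) (by exact_mod_cast hδ.ne')
  set K := (fun p : (Z → Bool) × (Z → Bool) => p.1 ⊔ p.2) '' (F ×ˢ Set.univ) with hK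
  have hsupc : Continuous (fun p : (Z → Bool) × (Z → Bool) => p.1 ⊔ p.2) := by
    apply continuous_pi
    intro e
    have hrep : (fun p : (Z → Bool) × (Z → Bool) => (p.1 ⊔ p.2) e)
        = (fun q : Bool × Bool => q.1 ⊔ q.2) ∘ (fun p : (Z → Bool) × (Z → Bool) =>
            (p.1 e, p.2 e)) := rfl
    rw [hrep]
    exact Continuous.comp continuous_of_discreteTopology
      (((continuous_apply e).comp continuous_fst).prodMk
        ((continuous_apply e).comp continuous_snd))
  have hKc : IsClosed K :=
    ((hFc.isCompact.prod isCompact_univ).image hsupc).isClosed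
  have hKi : ∀ ⦃A B : Z → Bool⦄, A ≤ B → A ∈ K → B ∈ K := by
    rintro A B hAB ⟨⟨x, y⟩, ⟨hx, -⟩, rfl⟩
    exact ⟨(x, B), ⟨hx, Set.mem_univ _⟩, sup_eq_right.mpr (le_trans le_sup_left hAB)⟩
  have hFK : F ⊆ K := fun A hA => ⟨(A, A), ⟨hA, Set.mem_univ _⟩, sup_idem A⟩
  have hKU : K ⊆ U := by
    rintro _ ⟨⟨x, y⟩, ⟨hx, -⟩, rfl⟩
    exact hUi le_sup_left (hFU hx)
  calc μ U ≤ μ F + δ := hF.le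
    _ ≤ μ K + δ := add_le_add_left (measure_mono hFK) _
    _ ≤ ν K + δ := add_le_add_left
        (stepClosed ε hε μ ν hν_indep hν_marginal hcond hKc hKi) _
    _ ≤ ν U + δ := add_le_add_left (measure_mono hKU) _

end HolleyAux


/-- Holley-type stochastic domination: let `Z` be countable, `ε_e ∈ (0,1]`, and let `ν`
be the product Bernoulli measure on `{0,1}^Z` (coordinates independent, coordinate `e`
equal to `1` with probability `ε_e`). If `μ` is a probability measure on `{0,1}^Z` such
that for every `e` the conditional probability of `{A : A(e) = 1}` given the σ-algebra
generated by the other coordinates is a.s. at most `ε_e`, then `μ` is stochastically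
dominated by `ν`: `∫ f dμ ≤ ∫ f dν` for every bounded measurable monotone `f`. -/
theorem stmt_0 {Z : Type*} [Countable Z] (ε : Z → ℝ) (hε : ∀ e, 0 < ε e ∧ ε e ≤ 1)
    (μ ν : Measure (Z → Bool)) [IsProbabilityMeasure μ] [IsProbabilityMeasure ν]
    (hν_indep : ProbabilityTheory.iIndepFun
      (fun (e : Z) (A : Z → Bool) => A e) ν)
    (hν_marginal : ∀ e : Z, ν {A | A e = true} = ENNReal.ofReal (ε e))
    (hcond : ∀ e : Z, ∀ᵐ A ∂μ,
      (μ[Set.indicator {A : Z → Bool | A e = true} (fun _ => (1 : ℝ)) |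
        coordsExcept Z e]) A ≤ ε e)
    (f : (Z → Bool) → ℝ) (hf_meas : Measurable f) (hf_bdd : ∃ C : ℝ, ∀ A, |f A| ≤ C)
    (hf_mono : Monotone f) :
    ∫ A, f A ∂μ ≤ ∫ A, f A ∂ν := by
  classical
  obtain ⟨C, hC⟩ := hf_bdd
  set g : (Z → Bool) → ℝ := fun A => f A + C with hg
  have hgm : Measurable g := hf_meas.add measurable_const
  have hgnn : ∀ A, 0 ≤ g A := fun A => by
    have := (abs_le.mp (hC A)).1
    rw [hg]; dsimp only; linarith
  have hgb : ∀ A, |g A| ≤ C + C := fun A => by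
    have h1 := (abs_le.mp (hC A)).1
    have h2 := (abs_le.mp (hC A)).2
    rw [hg, abs_le]; constructor <;> (dsimp only; linarith)
  have hintμ : Integrable g μ := HolleyAux.integrable_of_abs_le μ hgm hgb
  have hintν : Integrable g ν := HolleyAux.integrable_of_abs_le ν hgm hgb
  have key : ENNReal.ofReal (∫ A, g A ∂μ) ≤ ENNReal.ofReal (∫ A, g A ∂ν) := by
    rw [ofReal_integral_eq_lintegral_ofReal hintμ (Filter.Eventually.of_forall hgnn),
      ofReal_integral_eq_lintegral_ofReal hintν (Filter.Eventually.of_forall hgnn),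
      lintegral_eq_lintegral_meas_lt μ (Filter.Eventually.of_forall hgnn)
        hgm.aemeasurable,
      lintegral_eq_lintegral_meas_lt ν (Filter.Eventually.of_forall hgnn)
        hgm.aemeasurable]
    refine lintegral_mono fun t => ?_
    have hUm : MeasurableSet {a : Z → Bool | t < g a} := hgm measurableSet_Ioi
    have hUi : ∀ ⦃A B : Z → Bool⦄, A ≤ B → A ∈ {a : Z → Bool | t < g a} →
        B ∈ {a : Z → Bool | t < g a} := by
      intro A B hAB hA
      have : g A ≤ g B := by
        rw [hg]; dsimp only; have := hf_mono hAB; linarith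
      exact lt_of_lt_of_le hA this
    exact HolleyAux.stepBorel ε hε μ ν hν_indep hν_marginal hcond hUm hUi
  have hnn : 0 ≤ ∫ A, g A ∂ν := integral_nonneg hgnn
  have hle : ∫ A, g A ∂μ ≤ ∫ A, g A ∂ν :=
    (ENNReal.ofReal_le_ofReal_iff hnn).mp key
  have hμeq : ∫ A, g A ∂μ = (∫ A, f A ∂μ) + C := by
    rw [hg]
    rw [integral_add (HolleyAux.integrable_of_abs_le μ hf_meas hC) (integrable_const C),
      integral_const]
    simp [measure_univ]
  have hνeq : ∫ A, g A ∂ν = (∫ A, f A ∂ν) + C := by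
    rw [hg]
    rw [integral_add (HolleyAux.integrable_of_abs_le ν hf_meas hC) (integrable_const C),
      integral_const]
    simp [measure_univ]
  rw [hμeq, hνeq] at hle
  linarith
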